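/- For s > 0 and complex λ with Re λ > 0, the Laplace transform of t ↦ (tπ)^{-1/2} e^{-s²/(4t)} equals e^{-√λ s}/√λ, where √λ denotes the principal branch of the square root. -/

import Mathlib

open MeasureTheory Complex Set Filter

namespace LaplaceKernelAux


lemma image_inv_Ioi {c' : ℝ} (hc' : 0 < c') :
    (fun x : ℝ => c' / x) '' Ioi 0 = Ioi 0 := by
  ext y
  constructor
  · rintro ⟨x, hx, rfl⟩
    exact div_pos hc' hx
  · intro hy
    exact ⟨c' / y, div_pos hc' hy, by field_simp⟩

lemma image_inv_Ioi' {c' u₀ : ℝ} (hc' : 0 < c') (hu₀ : 0 < u₀) (h : u₀ ^ 2 = c') :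
    (fun x : ℝ => c' / x) '' Ioi u₀ = Ioo 0 u₀ := by
  ext y
  constructor
  · rintro ⟨x, hx, rfl⟩
    have hx' : u₀ < x := hx
    have hx0 : 0 < x := hu₀.trans hx'
    constructor
    · exact div_pos hc' hx0
    · rw [div_lt_iff₀ hx0, ← h]
      nlinarith
  · rintro ⟨hy0, hyu⟩
    refine ⟨c' / y, ?_, by field_simp⟩
    rw [mem_Ioi, lt_div_iff₀ hy0, ← h]
    nlinarith

lemma hasDerivWithinAt_inv_c {c' : ℝ} {s : Set ℝ} (hs : s ⊆ Ioi 0) :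
    ∀ x ∈ s, HasDerivWithinAt (fun x : ℝ => c' / x) (-(c' / x ^ 2)) s x := by
  intro x hx
  have hx0 : x ≠ 0 := ne_of_gt (hs hx)
  have := ((hasDerivAt_inv hx0).const_mul c').hasDerivWithinAt (s := s)
  simp only [div_eq_mul_inv]
  exact this.congr_deriv (by ring)

lemma injOn_inv_c {c' : ℝ} (hc' : 0 < c') {s : Set ℝ} (hs : s ⊆ Ioi 0) :
    InjOn (fun x : ℝ => c' / x) s := by
  intro a ha b hb hab
  have ha0 : (0:ℝ) < a := hs ha
  have hb0 : (0:ℝ) < b := hs hb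
  field_simp at hab
  exact hab.symm

lemma glasser {α c : ℝ} (hα : 0 < α) (hc : 0 < c) :
    ∫ u in Ioi (0:ℝ), Real.exp (-(α * u - c / u) ^ 2)
      = Real.sqrt Real.pi / (2 * α) := by
  set c' : ℝ := c / α with hc'def
  have hc' : 0 < c' := div_pos hc hα
  set u₀ : ℝ := Real.sqrt c' with hu₀def
  have hu₀ : 0 < u₀ := Real.sqrt_pos.2 hc'
  have hu₀sq : u₀ ^ 2 = c' := Real.sq_sqrt hc'.le
  set g : ℝ → ℝ := fun u => Real.exp (-(α * u - c / u) ^ 2) with hgdef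
  set h : ℝ → ℝ := fun u => (α + c / u ^ 2) * g u with hhdef
  -- algebraic symmetry : g (c'/x) = g x for x > 0
  have halg : ∀ x : ℝ, 0 < x → g (c' / x) = g x := by
    intro x hx
    simp only [hgdef]
    congr 1
    rw [neg_inj]
    have hα' : α ≠ 0 := ne_of_gt hα
    have h1 : α * (c' / x) - c / (c' / x) = -(α * x - c / x) := by
      rw [hc'def]
      field_simp
      ring
    rw [h1]
    ring
  -- h-symmetry : (c'/x^2) * h (c'/x) = h x for x > 0
  have halg2 : ∀ x : ℝ, 0 < x → (c' / x ^ 2) * h (c' / x) = h x := by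
    intro x hx
    simp only [hhdef, halg x hx]
    have : c' / x ^ 2 * ((α + c / (c' / x) ^ 2) * g x) = (c' / x ^ 2 * (α + c / (c' / x) ^ 2)) * g x := by ring
    rw [this]
    congr 1
    have hα' : α ≠ 0 := ne_of_gt hα
    rw [hc'def]
    field_simp
    ring
  -- bound for g
  have hgbound : ∀ x : ℝ, g x ≤ Real.exp (2 * α * c) * Real.exp (-(α^2) * x ^ 2) := by
    intro x
    rw [← Real.exp_add, hgdef]
    apply Real.exp_le_exp.2
    rcases eq_or_ne x 0 with rfl | hx
    · simp
      nlinarith [Real.exp_pos 1]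
    · have h2 : (α * x - c / x) ^ 2 = α^2 * x^2 - 2*α*c + (c/x)^2 := by
        field_simp
        ring
      nlinarith [sq_nonneg (c / x)]
  have hα2 : (0:ℝ) < α ^ 2 := by positivity
  -- continuity of g on sets avoiding 0
  have hg_cont : ∀ s : Set ℝ, s ⊆ Ioi 0 → ContinuousOn g s := by
    intro s hs
    apply Real.continuous_exp.comp_continuousOn
    apply ContinuousOn.neg
    apply ContinuousOn.pow
    exact (continuousOn_const.mul continuousOn_id).sub
      (continuousOn_const.div continuousOn_id fun x hx => ne_of_gt (hs hx))
  have hh_cont : ∀ s : Set ℝ, s ⊆ Ioi 0 → ContinuousOn h s := by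
    intro s hs
    exact (continuousOn_const.add (continuousOn_const.div (continuousOn_id.pow 2)
      fun x hx => pow_ne_zero _ (ne_of_gt (hs hx)))).mul (hg_cont s hs)
  -- integrability of g on Ioi 0
  have Ig : IntegrableOn g (Ioi 0) := by
    refine Integrable.mono'
      (((integrable_exp_neg_mul_sq hα2).const_mul (Real.exp (2*α*c))).restrict (s := Ioi 0))
      ((hg_cont _ subset_rfl).aestronglyMeasurable measurableSet_Ioi) ?_
    filter_upwards with x
    rw [Real.norm_eq_abs, abs_of_pos (Real.exp_pos _)]
    exact hgbound x
  -- Step A : ∫ g = ∫ (c'/x²) g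
  have stepA : ∫ u in Ioi (0:ℝ), g u = ∫ x in Ioi (0:ℝ), (c' / x ^ 2) * g x := by
    have := integral_image_eq_integral_abs_deriv_smul measurableSet_Ioi
      (hasDerivWithinAt_inv_c subset_rfl) (injOn_inv_c hc' subset_rfl) g
    rw [image_inv_Ioi hc'] at this
    rw [this]
    refine setIntegral_congr_fun measurableSet_Ioi (fun x hx => ?_)
    have hx0 : (0:ℝ) < x := hx
    rw [halg x hx0, smul_eq_mul, abs_neg, abs_of_pos (by positivity)]
  -- integrability of (c'/x²) g on Ioi 0
  have Ig' : IntegrableOn (fun x => (c' / x ^ 2) * g x) (Ioi 0) := by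
    have hiff := integrableOn_image_iff_integrableOn_abs_deriv_smul measurableSet_Ioi
      (hasDerivWithinAt_inv_c subset_rfl) (injOn_inv_c hc' subset_rfl) g
    rw [image_inv_Ioi hc'] at hiff
    refine (hiff.1 Ig).congr_fun (fun x hx => ?_) measurableSet_Ioi
    have hx0 : (0:ℝ) < x := hx
    beta_reduce
    rw [halg x hx0, smul_eq_mul, abs_neg, abs_of_pos (by positivity)]
  -- integrability of h on Ici u₀
  have Ih : IntegrableOn h (Ici u₀) := by
    refine Integrable.mono'
      ((((integrable_exp_neg_mul_sq hα2).const_mul (Real.exp (2*α*c))).const_mul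
        (α + c / u₀ ^ 2)).restrict (s := Ici u₀))
      ((hh_cont _ (fun x hx => lt_of_lt_of_le hu₀ hx)).aestronglyMeasurable measurableSet_Ici) ?_
    rw [ae_restrict_iff' measurableSet_Ici]
    filter_upwards with x hx
    have hx0 : (0:ℝ) < x := lt_of_lt_of_le hu₀ hx
    have h1 : (0:ℝ) < α + c / x ^ 2 := by positivity
    rw [Real.norm_eq_abs, hhdef, abs_of_pos (by positivity)]
    have h2 : α + c / x ^ 2 ≤ α + c / u₀ ^ 2 := by
      have := div_le_div_of_nonneg_left hc.le (by positivity : (0:ℝ) < u₀ ^ 2)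
        (pow_le_pow_left₀ hu₀.le hx 2)
      linarith
    calc (α + c / x ^ 2) * g x ≤ (α + c / u₀ ^ 2) * g x := by
          apply mul_le_mul_of_nonneg_right h2 (Real.exp_nonneg _)
      _ ≤ (α + c / u₀ ^ 2) * (Real.exp (2*α*c) * Real.exp (-(α^2) * x ^ 2)) := by
          apply mul_le_mul_of_nonneg_left (hgbound x) (by positivity)
  -- Step C : ∫_{Ioi u₀} h = √π / 2
  have hφu₀ : α * u₀ - c / u₀ = 0 := by
    have : α * u₀ ^ 2 = c := by rw [hu₀sq, hc'def]; field_simp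
    field_simp
    nlinarith [this]
  have stepC : ∫ x in Ioi u₀, h x = Real.sqrt Real.pi / 2 := by
    have key := integral_comp_smul_deriv_Ioi (f := fun u => α * u - c / u)
      (f' := fun x => α + c / x ^ 2) (g := fun v => Real.exp (-v ^ 2)) (a := u₀)
      ?_ ?_ ?_ ?_ ?_ ?_
    · rw [hφu₀] at key
      have : ∫ v in Ioi (0:ℝ), Real.exp (-v ^ 2) = Real.sqrt Real.pi / 2 := by
        have := integral_gaussian_Ioi 1
        simpa using this
      rw [← this, ← key]
      refine setIntegral_congr_fun measurableSet_Ioi (fun x hx => ?_)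
      simp only [hhdef, hgdef, smul_eq_mul, Function.comp]
    · exact (continuousOn_const.mul continuousOn_id).sub
        (continuousOn_const.div continuousOn_id
          fun x hx => ne_of_gt (lt_of_lt_of_le hu₀ hx))
    · have h1 : Tendsto (fun u : ℝ => -(c / u)) atTop (nhds 0) := by
        have := ((tendsto_const_nhds (x := c)).div_atTop (tendsto_id (α := ℝ))).neg
        simpa using this
      have h2 : Tendsto (fun u : ℝ => α * u) atTop atTop :=
        Tendsto.const_mul_atTop hα tendsto_id
      have := h1.add_atTop h2
      refine this.congr (fun u => by ring)
    · intro x hx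
      have hx0 : (0:ℝ) < x := hu₀.trans hx
      have hd : HasDerivAt (fun u : ℝ => α * u - c / u) (α + c / x ^ 2) x := by
        have d1 : HasDerivAt (fun u : ℝ => α * u) α x := by
          simpa using (hasDerivAt_id x).const_mul α
        have d2 : HasDerivAt (fun u : ℝ => c / u) (-(c / x ^ 2)) x := by
          simp only [div_eq_mul_inv]
          have := (hasDerivAt_inv (ne_of_gt hx0)).const_mul c
          exact this.congr_deriv (by ring)
        exact (d1.sub d2).congr_deriv (by ring)
      exact hd.hasDerivWithinAt
    · exact Continuous.continuousOn (by continuity)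
    · exact (((integrable_exp_neg_mul_sq one_pos).congr
        (Eventually.of_forall fun x => by norm_num)).integrableOn)
    · exact Ih.congr_fun (fun x hx => by
        simp only [hhdef, hgdef, smul_eq_mul, Function.comp]) measurableSet_Ici
  have hsub : Ioi u₀ ⊆ Ioi (0:ℝ) := fun x hx => hu₀.trans hx
  -- Step D : ∫_{Ioo 0 u₀} h = ∫_{Ioi u₀} h
  have stepD : ∫ x in Ioo (0:ℝ) u₀, h x = ∫ x in Ioi u₀, h x := by
    have key := integral_image_eq_integral_abs_deriv_smul measurableSet_Ioi
      (hasDerivWithinAt_inv_c hsub) (injOn_inv_c hc' hsub) h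
    rw [image_inv_Ioi' hc' hu₀ hu₀sq] at key
    rw [key]
    refine setIntegral_congr_fun measurableSet_Ioi (fun x hx => ?_)
    have hx0 : (0:ℝ) < x := hu₀.trans hx
    rw [smul_eq_mul, abs_neg, abs_of_pos (by positivity)]
    exact halg2 x hx0
  have IhIoo : IntegrableOn h (Ioo (0:ℝ) u₀) := by
    have hiff := integrableOn_image_iff_integrableOn_abs_deriv_smul measurableSet_Ioi
      (hasDerivWithinAt_inv_c hsub) (injOn_inv_c hc' hsub) h
    rw [image_inv_Ioi' hc' hu₀ hu₀sq] at hiff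
    refine hiff.2 ?_
    refine (Ih.mono_set Ioi_subset_Ici_self).congr_fun (fun x hx => ?_) measurableSet_Ioi
    have hx0 : (0:ℝ) < x := hu₀.trans hx
    rw [smul_eq_mul, abs_neg, abs_of_pos (by positivity)]
    exact (halg2 x hx0).symm
  -- Step F : ∫_{Ioi 0} h = √π
  have hunion : Ioo (0:ℝ) u₀ ∪ Ici u₀ = Ioi 0 := Ioo_union_Ici_eq_Ioi hu₀
  have hdisj : Disjoint (Ioo (0:ℝ) u₀) (Ici u₀) :=
    (Set.Iio_disjoint_Ici le_rfl).mono_left Set.Ioo_subset_Iio_self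
  have stepF : ∫ x in Ioi (0:ℝ), h x = Real.sqrt Real.pi := by
    rw [← hunion, setIntegral_union hdisj measurableSet_Ici IhIoo Ih,
      stepD, integral_Ici_eq_integral_Ioi, stepC]
    ring
  -- Step G : split the integral of h
  have stepG : ∫ x in Ioi (0:ℝ), h x
      = α * (∫ u in Ioi (0:ℝ), g u) + α * (∫ x in Ioi (0:ℝ), (c' / x ^ 2) * g x) := by
    have heq : ∀ x ∈ Ioi (0:ℝ), h x = α * g x + α * ((c' / x ^ 2) * g x) := by
      intro x hx
      have hx0 : (0:ℝ) < x := hx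
      have hac : α * c' = c := by rw [hc'def]; field_simp
      simp only [hhdef, ← hac]
      ring
    rw [setIntegral_congr_fun measurableSet_Ioi heq,
      integral_add (Ig.const_mul α) (Ig'.const_mul α),
      MeasureTheory.integral_const_mul, MeasureTheory.integral_const_mul]
  rw [← stepA] at stepG
  have hK : (2 * α) * ∫ u in Ioi (0:ℝ), g u = Real.sqrt Real.pi := by
    rw [← stepF, stepG]; ring
  show (∫ u in Ioi (0:ℝ), g u) = Real.sqrt Real.pi / (2 * α)
  rw [eq_div_iff (ne_of_gt (by positivity : (0:ℝ) < 2 * α))]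
  linear_combination hK

lemma real_case {a c : ℝ} (ha : 0 < a) (hc : 0 < c) :
    ∫ u in Ioi (0:ℝ), Real.exp (-(a * u ^ 2 + c ^ 2 / u ^ 2))
      = Real.sqrt Real.pi / (2 * Real.sqrt a) * Real.exp (-(2 * c * Real.sqrt a)) := by
  have hsa : 0 < Real.sqrt a := Real.sqrt_pos.2 ha
  have hsa2 : Real.sqrt a ^ 2 = a := Real.sq_sqrt ha.le
  have key : ∀ u ∈ Ioi (0:ℝ), Real.exp (-(a * u ^ 2 + c ^ 2 / u ^ 2))
      = Real.exp (-(2 * c * Real.sqrt a)) * Real.exp (-(Real.sqrt a * u - c / u) ^ 2) := by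
    intro u hu
    have hu0 : (0:ℝ) < u := hu
    rw [← Real.exp_add]
    congr 1
    have expand : (Real.sqrt a * u - c / u) ^ 2
        = a * u ^ 2 - 2 * c * Real.sqrt a + c ^ 2 / u ^ 2 := by
      have hu' : u ≠ 0 := ne_of_gt hu0
      field_simp
      linear_combination (u ^ 4 : ℝ) * hsa2
    rw [expand]
    ring
  rw [setIntegral_congr_fun measurableSet_Ioi key, MeasureTheory.integral_const_mul,
    glasser hsa hc]
  ring

noncomputable def Phi (c : ℝ) (l : ℂ) : ℂ :=
  ∫ u in Ioi (0:ℝ), Complex.exp (-(l * (u:ℂ) ^ 2 + (c:ℂ) ^ 2 / (u:ℂ) ^ 2))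

noncomputable def Psi (c : ℝ) (l : ℂ) : ℂ :=
  (Real.sqrt Real.pi : ℂ) / 2 * Complex.exp (-(2 * c * l ^ ((1:ℂ)/2))) / l ^ ((1:ℂ)/2)

lemma cpow_half_ofReal {a : ℝ} (ha : 0 < a) :
    ((a : ℂ) ^ ((1:ℂ)/2)) = ((Real.sqrt a : ℝ) : ℂ) := by
  rw [show ((1:ℂ)/2) = (((1/2 : ℝ) : ℂ)) by norm_num, ← Complex.ofReal_cpow ha.le]
  norm_cast
  rw [← Real.sqrt_eq_rpow]

lemma phi_eq_psi_real {a c : ℝ} (ha : 0 < a) (hc : 0 < c) :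
    Phi c (a : ℂ) = Psi c (a : ℂ) := by
  have hsa : 0 < Real.sqrt a := Real.sqrt_pos.2 ha
  have h0 : Phi c (a : ℂ)
      = ∫ u in Ioi (0:ℝ), ((Real.exp (-(a * u ^ 2 + c ^ 2 / u ^ 2)) : ℝ) : ℂ) := by
    rw [Phi]
    refine setIntegral_congr_fun measurableSet_Ioi (fun u hu => ?_)
    rw [Complex.ofReal_exp]
    congr 1
    push_cast
    ring
  have h1 : Phi c (a : ℂ)
      = ((∫ u in Ioi (0:ℝ), Real.exp (-(a * u ^ 2 + c ^ 2 / u ^ 2)) : ℝ) : ℂ) := by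
    rw [h0]; exact integral_ofReal
  rw [h1, real_case ha hc, Psi, cpow_half_ofReal ha]
  rw [show -(2 * (c:ℂ) * ((Real.sqrt a : ℝ) : ℂ)) = ((-(2 * c * Real.sqrt a) : ℝ) : ℂ) by
    push_cast; ring, ← Complex.ofReal_exp]
  rw [show ((Real.sqrt Real.pi : ℝ) : ℂ) / 2 = ((Real.sqrt Real.pi / 2 : ℝ) : ℂ) by push_cast; ring]
  rw [← Complex.ofReal_mul, ← Complex.ofReal_div, Complex.ofReal_inj]
  field_simp

lemma phi_diffOn (c : ℝ) (hc : 0 < c) :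
    DifferentiableOn ℂ (Phi c) {z : ℂ | 0 < z.re} := by
  intro l₀ hl₀
  have hre : 0 < l₀.re := hl₀
  set δ : ℝ := l₀.re / 2 with hδ
  have hδ0 : 0 < δ := by positivity
  set F : ℂ → ℝ → ℂ :=
    fun l u => Complex.exp (-(l * (u:ℂ) ^ 2 + (c:ℂ) ^ 2 / (u:ℂ) ^ 2)) with hF
  set F' : ℂ → ℝ → ℂ := fun l u => -(u:ℂ) ^ 2 * F l u with hF'
  have hexp : ∀ (l : ℂ) (u : ℝ),
      (-(l * (u:ℂ) ^ 2 + (c:ℂ) ^ 2 / (u:ℂ) ^ 2)).re = -(l.re * u ^ 2 + c ^ 2 / u ^ 2) := by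
    intro l u
    have h : (-(l * (u:ℂ) ^ 2 + (c:ℂ) ^ 2 / (u:ℂ) ^ 2))
        = -(l * ((u ^ 2 : ℝ) : ℂ) + ((c ^ 2 / u ^ 2 : ℝ) : ℂ)) := by push_cast; ring
    rw [h]
    simp only [Complex.neg_re, Complex.add_re, Complex.mul_re, Complex.ofReal_re,
      Complex.ofReal_im, mul_zero, sub_zero]
  have hnorm : ∀ (l : ℂ) (u : ℝ), ‖F l u‖ = Real.exp (-(l.re * u ^ 2 + c ^ 2 / u ^ 2)) := by
    intro l u
    rw [hF]
    simp only []
    rw [Complex.norm_exp, hexp]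
  have hcont : ∀ l : ℂ, ContinuousOn (F l) (Ioi (0:ℝ)) := by
    intro l
    apply Complex.continuous_exp.comp_continuousOn
    refine ContinuousOn.neg (ContinuousOn.add ?_ ?_)
    · exact continuousOn_const.mul ((Complex.continuous_ofReal.continuousOn).pow 2)
    · refine continuousOn_const.div ((Complex.continuous_ofReal.continuousOn).pow 2) ?_
      intro u hu
      exact pow_ne_zero _ (Complex.ofReal_ne_zero.2 (ne_of_gt hu))
  have hcont' : ContinuousOn (F' l₀) (Ioi (0:ℝ)) := by
    refine ContinuousOn.mul ?_ (hcont l₀)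
    exact ((Complex.continuous_ofReal.continuousOn).pow 2).neg
  have hball : ∀ l ∈ Metric.ball l₀ δ, δ ≤ l.re := by
    intro l hl
    have h1 : dist l l₀ < δ := hl
    have h2 : |(l - l₀).re| ≤ ‖l - l₀‖ := Complex.abs_re_le_norm _
    rw [Complex.dist_eq] at h1
    have : |l.re - l₀.re| < δ := by
      simpa [Complex.sub_re] using lt_of_le_of_lt h2 h1
    have := abs_lt.1 this
    simp only [hδ] at *
    linarith [this.1]
  have hFle : ∀ (l : ℂ), δ ≤ l.re → ∀ u ∈ Ioi (0:ℝ),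
      ‖F l u‖ ≤ Real.exp (-δ * u ^ 2) := by
    intro l hl u hu
    rw [hnorm]
    apply Real.exp_le_exp.2
    have h1 : (0:ℝ) ≤ c ^ 2 / u ^ 2 := by positivity
    nlinarith [sq_nonneg u]
  have hbound_int : Integrable (fun u : ℝ => u ^ 2 * Real.exp (-δ * u ^ 2))
      (volume.restrict (Ioi 0)) := by
    have h := integrableOn_rpow_mul_exp_neg_mul_sq hδ0 (s := 2) (by norm_num)
    refine h.congr_fun (fun x hx => ?_) measurableSet_Ioi
    beta_reduce
    rw [show ((2:ℝ) : ℝ) = ((2:ℕ) : ℝ) by norm_num, Real.rpow_natCast]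
  have main := hasDerivAt_integral_of_dominated_loc_of_deriv_le
    (μ := volume.restrict (Ioi (0:ℝ))) (F := F) (F' := F') (x₀ := l₀)
    (bound := fun u => u ^ 2 * Real.exp (-δ * u ^ 2)) (s := Metric.ball l₀ δ) (Metric.ball_mem_nhds l₀ hδ0)
    (Eventually.of_forall fun l => ((hcont l).aestronglyMeasurable measurableSet_Ioi))
    ?_ (hcont'.aestronglyMeasurable measurableSet_Ioi) ?_ hbound_int ?_
  · exact main.2.differentiableAt.differentiableWithinAt
  · -- integrability of F l₀
    refine Integrable.mono' ((integrable_exp_neg_mul_sq hδ0).restrict (s := Ioi 0))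
      ((hcont l₀).aestronglyMeasurable measurableSet_Ioi) ?_
    rw [ae_restrict_iff' measurableSet_Ioi]
    filter_upwards with u hu
    exact hFle l₀ (by simp only [hδ]; linarith) u hu
  · -- bound for F'
    rw [ae_restrict_iff' measurableSet_Ioi]
    filter_upwards with u hu
    intro l hl
    have h1 : ‖F' l u‖ = u ^ 2 * ‖F l u‖ := by
      rw [hF']
      simp only []
      rw [norm_mul, norm_neg, norm_pow, Complex.norm_real, Real.norm_eq_abs,
        _root_.sq_abs]
    rw [h1]
    exact mul_le_mul_of_nonneg_left (hFle l (hball l hl) u hu) (sq_nonneg u)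
  · -- differentiability in l
    rw [ae_restrict_iff' measurableSet_Ioi]
    filter_upwards with u hu
    intro l _
    have hinner : HasDerivAt (fun l : ℂ => -(l * (u:ℂ) ^ 2 + (c:ℂ) ^ 2 / (u:ℂ) ^ 2))
        (-(u:ℂ) ^ 2) l := by
      have := ((hasDerivAt_mul_const (x := l) ((u:ℂ) ^ 2)).add_const
        ((c:ℂ) ^ 2 / (u:ℂ) ^ 2)).neg
      exact this
    have := hinner.cexp
    rw [hF, hF']
    simp only []
    exact this.congr_deriv (by ring)

lemma psi_diffOn (c : ℝ) :
    DifferentiableOn ℂ (Psi c) {z : ℂ | 0 < z.re} := by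
  intro z hz
  have hz' : z ∈ Complex.slitPlane := Or.inl hz
  have hz0 : z ≠ 0 := by
    intro h; rw [h] at hz; simp at hz
  have hpow : DifferentiableAt ℂ (fun w : ℂ => w ^ ((1:ℂ)/2)) z :=
    differentiableAt_id.cpow (differentiableAt_const _) hz'
  have hne : z ^ ((1:ℂ)/2) ≠ 0 := by
    simp [Complex.cpow_eq_zero_iff, hz0]
  exact (((differentiableAt_const _).mul
    (((differentiableAt_const _).mul hpow).neg.cexp)).div hpow hne).differentiableWithinAt

lemma phi_eq_psi {c : ℝ} (hc : 0 < c) {l : ℂ} (hl : 0 < l.re) :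
    Phi c l = Psi c l := by
  have hU : IsOpen {z : ℂ | 0 < z.re} := isOpen_lt continuous_const Complex.continuous_re
  have hpre : IsPreconnected {z : ℂ | 0 < z.re} := (convex_halfSpace_re_gt 0).isPreconnected
  have hf : AnalyticOnNhd ℂ (Phi c) {z : ℂ | 0 < z.re} :=
    (phi_diffOn c hc).analyticOnNhd hU
  have hg : AnalyticOnNhd ℂ (Psi c) {z : ℂ | 0 < z.re} :=
    (psi_diffOn c).analyticOnNhd hU
  have h1 : (1:ℂ) ∈ {z : ℂ | 0 < z.re} := by norm_num
  have hfreq : ∃ᶠ z in nhdsWithin (1:ℂ) {(1:ℂ)}ᶜ, Phi c z = Psi c z := by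
    have ht0 : Tendsto (fun n : ℕ => ((1 + ((n:ℝ)+1)⁻¹ : ℝ) : ℂ)) atTop (nhds 1) := by
      have : Tendsto (fun n : ℕ => (1 + ((n:ℝ)+1)⁻¹ : ℝ)) atTop (nhds 1) := by
        have h := tendsto_one_div_add_atTop_nhds_zero_nat (𝕜 := ℝ)
        simpa [one_div] using (tendsto_const_nhds (x := (1:ℝ))).add h
      have := (Complex.continuous_ofReal.tendsto 1).comp this
      rw [Complex.ofReal_one] at this; exact this.congr (fun n => by simp)
    have ht : Tendsto (fun n : ℕ => ((1 + ((n:ℝ)+1)⁻¹ : ℝ) : ℂ)) atTop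
        (nhdsWithin (1:ℂ) {(1:ℂ)}ᶜ) := by
      refine tendsto_nhdsWithin_iff.2 ⟨ht0, Eventually.of_forall fun n => ?_⟩
      simp only [mem_compl_iff, mem_singleton_iff]
      intro h
      have : (1 + ((n:ℝ)+1)⁻¹ : ℝ) = 1 := by exact_mod_cast h
      nlinarith [inv_pos.2 (show (0:ℝ) < (n:ℝ)+1 by positivity), this]
    exact ht.frequently (Frequently.of_forall fun n =>
      phi_eq_psi_real (by positivity) hc)
  exact hf.eqOn_of_preconnected_of_frequently_eq hg hpre h1 hfreq hl

end LaplaceKernelAux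

/-- Laplace transform of `t ↦ (tπ)^(-1/2) e^(-s²/(4t))` is `e^(-√λ s)/√λ`. -/
theorem laplace_gaussian_kernel (s : ℝ) (hs : 0 < s) (lam : ℂ) (hl : 0 < lam.re) :
    ∫ t in Set.Ioi (0 : ℝ),
      Complex.exp (-lam * t) * ((Real.sqrt (t * Real.pi))⁻¹ : ℝ) *
        Complex.exp (-(s : ℂ) ^ 2 / (4 * t))
      = Complex.exp (-(lam ^ ((1 : ℂ) / 2)) * s) / lam ^ ((1 : ℂ) / 2) := by
  have hc : 0 < s / 2 := by linarith
  have hπ : (0:ℝ) < Real.sqrt Real.pi := Real.sqrt_pos.2 Real.pi_pos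
  have hlam0 : lam ≠ 0 := by
    intro h; rw [h] at hl; simp at hl
  have hP : lam ^ ((1:ℂ)/2) ≠ 0 := by
    simp [Complex.cpow_eq_zero_iff, hlam0]
  have hkey := LaplaceKernelAux.phi_eq_psi hc (l := lam) hl
  have hsub := integral_comp_rpow_Ioi_of_pos
    (g := fun t : ℝ => Complex.exp (-lam * t) * ((Real.sqrt (t * Real.pi))⁻¹ : ℝ) *
      Complex.exp (-(s : ℂ) ^ 2 / (4 * t))) (p := 2) two_pos
  rw [← hsub]
  have hcong : ∀ x ∈ Set.Ioi (0:ℝ),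
      ((2 : ℝ) * x ^ ((2:ℝ) - 1)) • (Complex.exp (-lam * ((x ^ (2:ℝ) : ℝ) : ℂ)) *
        ((Real.sqrt ((x ^ (2:ℝ) : ℝ) * Real.pi))⁻¹ : ℝ) *
        Complex.exp (-(s : ℂ) ^ 2 / (4 * ((x ^ (2:ℝ) : ℝ) : ℂ))))
      = ((2 / Real.sqrt Real.pi : ℝ) : ℂ) *
        Complex.exp (-(lam * (x:ℂ) ^ 2 + ((s/2 : ℝ):ℂ) ^ 2 / (x:ℂ) ^ 2)) := by
    intro x hx
    have hx0 : (0:ℝ) < x := hx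
    have h1 : x ^ ((2:ℝ)) = x ^ 2 := by
      rw [← Real.rpow_natCast x 2]; norm_num
    have h2 : Real.sqrt (x ^ 2 * Real.pi) = x * Real.sqrt Real.pi := by
      rw [Real.sqrt_mul (sq_nonneg x), Real.sqrt_sq hx0.le]
    have h3 : ((2:ℝ) - 1) = (1:ℝ) := by norm_num
    rw [h1, h2, h3, Real.rpow_one, Complex.real_smul]
    have he : Complex.exp (-lam * ((x^2 : ℝ):ℂ)) *
        Complex.exp (-(s : ℂ) ^ 2 / (4 * ((x ^ 2 : ℝ):ℂ)))
        = Complex.exp (-(lam * (x:ℂ) ^ 2 + ((s/2 : ℝ):ℂ) ^ 2 / (x:ℂ) ^ 2)) := by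
      rw [← Complex.exp_add]
      congr 1
      have hxC : (x:ℂ) ≠ 0 := Complex.ofReal_ne_zero.2 (ne_of_gt hx0)
      push_cast
      field_simp
      ring
    rw [show ((2 * x : ℝ) : ℂ) * (Complex.exp (-lam * ((x^2 : ℝ):ℂ)) *
          ((((x * Real.sqrt Real.pi))⁻¹ : ℝ) : ℂ) *
          Complex.exp (-(s : ℂ) ^ 2 / (4 * ((x ^ 2 : ℝ):ℂ))))
        = (((2 * x : ℝ) : ℂ) * ((((x * Real.sqrt Real.pi))⁻¹ : ℝ) : ℂ)) *
          (Complex.exp (-lam * ((x^2 : ℝ):ℂ)) *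
          Complex.exp (-(s : ℂ) ^ 2 / (4 * ((x ^ 2 : ℝ):ℂ)))) from by ring, he]
    congr 1
    rw [← Complex.ofReal_mul, Complex.ofReal_inj]
    field_simp
  rw [setIntegral_congr_fun measurableSet_Ioi hcong, MeasureTheory.integral_const_mul]
  have hphi : (∫ x in Set.Ioi (0:ℝ),
      Complex.exp (-(lam * (x:ℂ) ^ 2 + ((s/2 : ℝ):ℂ) ^ 2 / (x:ℂ) ^ 2)))
      = LaplaceKernelAux.Phi (s/2) lam := rfl
  rw [hphi, hkey, LaplaceKernelAux.Psi]
  have harg : -(2 * ((s/2 : ℝ):ℂ) * lam ^ ((1:ℂ)/2)) = -(lam ^ ((1:ℂ)/2)) * (s:ℂ) := by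
    push_cast; ring
  rw [harg]
  have hπC : ((Real.sqrt Real.pi : ℝ) : ℂ) ≠ 0 := Complex.ofReal_ne_zero.2 hπ.ne'
  rw [div_eq_mul_inv, div_eq_mul_inv]
  push_cast
  field_simp
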